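/- The Eddington factor χ(f) = (3 + 4f²)/(5 + 2√(4 − 3f²)) is monotonically increasing on [0,1]. -/
import Mathlib


/-- The Eddington factor `χ(f) = (3 + 4f²)/(5 + 2√(4 − 3f²))` is monotonically
increasing on `[0,1]`. -/
theorem eddington_factor_monotone
    (χ : ℝ → ℝ)
    (hχ : ∀ f : ℝ, χ f = (3 + 4 * f ^ 2) / (5 + 2 * Real.sqrt (4 - 3 * f ^ 2))) :
    MonotoneOn χ (Set.Icc (0 : ℝ) 1) := by
  have key : ∀ f : ℝ, f ∈ Set.Icc (0 : ℝ) 1 →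
      χ f = (5 - 2 * Real.sqrt (4 - 3 * f ^ 2)) / 3 := by
    intro f hf
    have hf2 : f ^ 2 ≤ 1 := by nlinarith [hf.1, hf.2]
    have hnn : (0 : ℝ) ≤ 4 - 3 * f ^ 2 := by nlinarith
    have hs : Real.sqrt (4 - 3 * f ^ 2) ^ 2 = 4 - 3 * f ^ 2 :=
      Real.sq_sqrt hnn
    have hspos : (0 : ℝ) ≤ Real.sqrt (4 - 3 * f ^ 2) := Real.sqrt_nonneg _
    rw [hχ]
    rw [div_eq_div_iff (by positivity) (by norm_num)]
    nlinarith [hs]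
  intro a ha b hb hab
  rw [key a ha, key b hb]
  have h1 : Real.sqrt (4 - 3 * b ^ 2) ≤ Real.sqrt (4 - 3 * a ^ 2) := by
    apply Real.sqrt_le_sqrt
    nlinarith [ha.1]
  linarith
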